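/- If β ∈ (0,1] has continued fraction expansion [0;a_1,a_2,…] and ω_1(β)|_n is the Farey coding of β of length n, then the associated inverse branch is the Möbius map f_{1,ω_1(β)|_n}(x) = ((r(n)·p_{m(n)} + p_{m(n)-1})·x + p_{m(n)}) / ((r(n)·q_{m(n)} + q_{m(n)-1})·x + q_{m(n)}), where p_k, q_k are the continued fraction convergent numerators/denominators of β, m(n) is the number of indices ℓ ≤ n with T_1^{ℓ-1}(β) > 1/2, and r(n) = n - max{k ≤ n : T_1^{k-1}(β) > 1/2}. -/

import Mathlib

/-- The Farey map. -/
noncomputable def T1 (x : ℝ) : ℝ := if x ≤ 1/2 then x / (1 - x) else (1 - x) / x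

/-- Left inverse branch of the Farey map. -/
noncomputable def g0 (x : ℝ) : ℝ := x / (1 + x)

/-- Right inverse branch of the Farey map. -/
noncomputable def g1 (x : ℝ) : ℝ := 1 / (1 + x)

open scoped Classical in
/-- `F β n = f_{1,ω₁(β)|ₙ}`, the composition of the Farey inverse branches along the
coding of `β` (where `ω_{1,k}(β) = 1` iff `T₁^{k-1}(β) > 1/2`). -/
noncomputable def F (β : ℝ) : ℕ → ℝ → ℝ
  | 0 => id
  | n + 1 => F β n ∘ (if 1/2 < T1^[n] β then g1 else g0)

/-- Shifted continued fraction numerators: `P a 0 = p₋₁ = 1`, `P a (k+1) = p_k`,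
with `p_k = a_k p_{k-1} + p_{k-2}`. -/
def P (a : ℕ → ℕ) : ℕ → ℕ
  | 0 => 1
  | 1 => 0
  | n + 2 => a (n + 1) * P a (n + 1) + P a n

/-- Shifted continued fraction denominators: `Q a 0 = q₋₁ = 0`, `Q a (k+1) = q_k`,
with `q_k = a_k q_{k-1} + q_{k-2}`. -/
def Q (a : ℕ → ℕ) : ℕ → ℕ
  | 0 => 0
  | 1 => 1
  | n + 2 => a (n + 1) * Q a (n + 1) + Q a n

open scoped Classical in
/-- `m(n)`: the number of indices `ℓ ≤ n` with `T₁^{ℓ-1}(β) > 1/2`. -/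
noncomputable def mfun (β : ℝ) (n : ℕ) : ℕ :=
  ((Finset.Icc 1 n).filter (fun ℓ => 1/2 < T1^[ℓ - 1] β)).card

open scoped Classical in
/-- `k(n) = max {ℓ ≤ n : T₁^{ℓ-1}(β) > 1/2}` (with value `0` if no such index exists). -/
noncomputable def kfun (β : ℝ) (n : ℕ) : ℕ :=
  ((Finset.Icc 1 n).filter (fun ℓ => 1/2 < T1^[ℓ - 1] β)).sup id

/-- The Gauss map. -/
noncomputable def gauss (x : ℝ) : ℝ := 1/x - ⌊1/x⌋

/-- `β` has infinite continued fraction expansion `[0; a 1, a 2, …]`. -/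
def HasCF (β : ℝ) (a : ℕ → ℕ) : Prop :=
  ∀ k : ℕ, gauss^[k] β ∈ Set.Ioo (0:ℝ) 1 ∧ (a (k + 1) : ℝ) = ⌊1 / gauss^[k] β⌋

section Aux

open scoped Classical

lemma kfun_le (β : ℝ) (n : ℕ) : kfun β n ≤ n := by
  refine Finset.sup_le fun ℓ hℓ => ?_
  simp only [Finset.mem_filter, Finset.mem_Icc] at hℓ
  exact hℓ.1.2

lemma Icc_split (β : ℝ) (n : ℕ) :
    (Finset.Icc 1 (n+1)).filter (fun ℓ => 1/2 < T1^[ℓ - 1] β)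
      = if 1/2 < T1^[n] β
        then insert (n+1) ((Finset.Icc 1 n).filter (fun ℓ => 1/2 < T1^[ℓ - 1] β))
        else (Finset.Icc 1 n).filter (fun ℓ => 1/2 < T1^[ℓ - 1] β) := by
  rw [← Finset.insert_Icc_right_eq_Icc_add_one (by omega : 1 ≤ n + 1), Finset.filter_insert]
  simp

lemma mfun_succ_pos (β : ℝ) (n : ℕ) (h : 1/2 < T1^[n] β) :
    mfun β (n+1) = mfun β n + 1 := by
  unfold mfun
  rw [Icc_split, if_pos h, Finset.card_insert_of_notMem (by simp)]

lemma mfun_succ_neg (β : ℝ) (n : ℕ) (h : ¬ 1/2 < T1^[n] β) :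
    mfun β (n+1) = mfun β n := by
  unfold mfun
  rw [Icc_split, if_neg h]

lemma kfun_succ_pos (β : ℝ) (n : ℕ) (h : 1/2 < T1^[n] β) :
    kfun β (n+1) = n + 1 := by
  unfold kfun
  rw [Icc_split, if_pos h, Finset.sup_insert]
  have := kfun_le β n
  unfold kfun at this
  simp only [id]
  omega

lemma kfun_succ_neg (β : ℝ) (n : ℕ) (h : ¬ 1/2 < T1^[n] β) :
    kfun β (n+1) = kfun β n := by
  unfold kfun
  rw [Icc_split, if_neg h]

lemma mfun_zero (β : ℝ) : mfun β 0 = 0 := by simp [mfun]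

lemma kfun_zero (β : ℝ) : kfun β 0 = 0 := by simp [kfun]

end Aux
section Aux2

lemma cf_bounds (β : ℝ) (a : ℕ → ℕ) (ha : HasCF β a) (k : ℕ) :
    0 < gauss^[k] β ∧ gauss^[k] β < 1 ∧
    (a (k+1) : ℝ) < 1 / gauss^[k] β ∧ 1 / gauss^[k] β < a (k+1) + 1 ∧ 1 ≤ a (k+1) := by
  obtain ⟨⟨hg0, hg1⟩, hfl⟩ := ha k
  obtain ⟨⟨hg0', _⟩, _⟩ := ha (k+1)
  have hnext : gauss^[k+1] β = 1 / gauss^[k] β - a (k+1) := by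
    rw [Function.iterate_succ_apply', gauss, hfl]
  refine ⟨hg0, hg1, ?_, ?_, ?_⟩
  · rw [hnext] at hg0'; linarith
  · have := Int.lt_floor_add_one (1 / gauss^[k] β)
    rw [← hfl] at this; exact_mod_cast this
  · have h2 : (1:ℝ) < 1 / gauss^[k] β := by
      rw [lt_div_iff₀ hg0]; linarith
    have h3 : (1:ℝ) ≤ (a (k+1) : ℝ) := by
      rw [hfl]
      exact_mod_cast Int.le_floor.mpr (by exact_mod_cast h2.le)
    exact_mod_cast h3

lemma inv_branch_algebra (D : ℝ) (hD : 1 < D) : (1/D) / (1 - 1/D) = 1/(D-1) := by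
  have h1 : D ≠ 0 := by linarith
  have h2 : D - 1 ≠ 0 := by linarith
  field_simp

lemma orbit (β : ℝ) (a : ℕ → ℕ) (ha : HasCF β a) (n : ℕ) :
    T1^[n] β = 1 / (1 / gauss^[mfun β n] β - (n - kfun β n : ℕ))
    ∧ (n - kfun β n) + 1 ≤ a (mfun β n + 1)
    ∧ (1/2 < T1^[n] β → (n - kfun β n) + 1 = a (mfun β n + 1)) := by
  induction n with
  | zero =>
    obtain ⟨hg0, hg1, hlo, hhi, h1⟩ := cf_bounds β a ha 0
    simp only [Function.iterate_zero_apply] at *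
    rw [mfun_zero, kfun_zero]
    refine ⟨by simp [one_div_one_div], by simpa using h1, fun hb => ?_⟩
    have h2 : 1 / β < 2 := by
      rw [div_lt_iff₀ hg0]; linarith
    have h3 : (a (0+1) : ℝ) < 2 := lt_trans hlo h2
    have h4 : a (0+1) < 2 := by exact_mod_cast h3
    omega
  | succ n ih =>
    obtain ⟨ih1, ih2, ih3⟩ := ih
    set m := mfun β n with hm
    set g := gauss^[m] β with hg
    obtain ⟨hg0, hg1, hlo, hhi, h1⟩ := cf_bounds β a ha m
    have hkn := kfun_le β n
    set r : ℕ := n - kfun β n with hrdef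
    have hA : (r : ℝ) + 1 ≤ a (m+1) := by exact_mod_cast ih2
    have hden : (1:ℝ) < 1 / g - r := by linarith
    have hden0 : (0:ℝ) < 1 / g - r := by linarith
    have ht0 : 0 < T1^[n] β := by rw [ih1]; positivity
    have ht1 : T1^[n] β < 1 := by
      rw [ih1, div_lt_one hden0]; linarith
    have htinv : 1 / T1^[n] β = 1 / g - r := by
      rw [ih1, one_div_one_div]
    by_cases hb : 1/2 < T1^[n] β
    · -- right branch
      have hreq : (r:ℝ) + 1 = a (m+1) := by exact_mod_cast ih3 hb
      have hT : T1^[n+1] β = gauss^[m+1] β := by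
        rw [Function.iterate_succ_apply', T1, if_neg (not_le.mpr hb),
          Function.iterate_succ_apply', gauss, ← hg]
        have hfl := (ha m).2
        rw [← hfl]
        have heq : (1 - T1^[n] β) / T1^[n] β = 1 / T1^[n] β - 1 := by
          field_simp
        rw [heq, htinv]; linarith
      obtain ⟨hg0', hg1', hlo', hhi', h1'⟩ := cf_bounds β a ha (m+1)
      rw [mfun_succ_pos β n hb, kfun_succ_pos β n hb, ← hm]
      have hr0 : n + 1 - (n + 1) = 0 := by omega
      rw [hr0]
      refine ⟨?_, by omega, fun hb' => ?_⟩
      · rw [hT]; simp [one_div_one_div]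
      · rw [hT] at hb'
        have h5 : 1 / gauss^[m+1] β < 2 := by
          rw [div_lt_iff₀ hg0']; linarith
        have h6 : (a (m+1+1) : ℝ) < 2 := lt_trans hlo' h5
        have h7 : a (m+1+1) < 2 := by exact_mod_cast h6
        omega
    · -- left branch
      have hT : T1^[n+1] β = 1 / (1 / g - ((r:ℝ) + 1)) := by
        rw [Function.iterate_succ_apply', T1, if_pos (not_lt.mp hb), ih1,
          inv_branch_algebra _ hden]
        congr 1; ring
      have hlt : r + 1 < a (m + 1) := by
        rcases lt_or_eq_of_le ih2 with h | h
        · exact h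
        · exfalso
          have heq : (r:ℝ) + 1 = a (m+1) := by exact_mod_cast h
          have hd2 : 1 / g - r < 2 := by linarith
          have : 1/2 < T1^[n] β := by
            rw [ih1, lt_div_iff₀ hden0]; linarith
          exact hb this
      rw [mfun_succ_neg β n hb, kfun_succ_neg β n hb, ← hm]
      have hr' : n + 1 - kfun β n = r + 1 := by omega
      rw [hr']
      refine ⟨by rw [hT, hg]; push_cast; ring_nf, by omega, fun hb' => ?_⟩
      rw [hT] at hb'
      have hD1 : (0:ℝ) < 1/g - ((r:ℝ)+1) := by linarith
      rw [lt_div_iff₀ hD1] at hb'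
      have h8 : (a (m+1) : ℝ) < (r:ℝ) + 3 := by linarith
      have h9 : a (m+1) < r + 3 := by exact_mod_cast h8
      omega

end Aux2
section Aux3

lemma a_pos (β : ℝ) (a : ℕ → ℕ) (ha : HasCF β a) (k : ℕ) : 1 ≤ a (k+1) :=
  (cf_bounds β a ha k).2.2.2.2

lemma Q_pos (β : ℝ) (a : ℕ → ℕ) (ha : HasCF β a) : ∀ k, 1 ≤ Q a (k+1) := by
  intro k
  induction k using Nat.strong_induction_on with
  | _ k ih =>
    match k with
    | 0 => simp [Q]
    | 1 => simpa [Q] using a_pos β a ha 0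
    | (k+1) =>
      show 1 ≤ Q a (k+2)
      rw [show Q a (k+2) = a (k+1) * Q a (k+1) + Q a k from rfl]
      have h1 := a_pos β a ha k
      have h2 := ih k (by omega)
      have := Nat.mul_le_mul h1 h2
      omega

end Aux3
section Aux4

lemma key1 (R p1 p0 q1 q0 x : ℝ) (hx : 0 ≤ x) (hR : 0 ≤ R)
    (hq1 : 0 < q1) (hq0 : 0 ≤ q0) :
    ((R*q1+q0) * (1/(1+x)) + q1) ≠ 0 →
    ((R*p1+p0) * (1/(1+x)) + p1) / ((R*q1+q0) * (1/(1+x)) + q1)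
      = (p1 * x + (R*p1+p0+p1)) / (q1 * x + (R*q1+q0+q1)) := by
  intro _
  have h1 : (0:ℝ) < 1 + x := by linarith
  have h2 : (0:ℝ) < 1/(1+x) := by positivity
  have hRq : 0 ≤ R * q1 := mul_nonneg hR hq1.le
  have hD1 : 0 < (R*q1+q0) * (1/(1+x)) + q1 := by
    have : 0 ≤ (R*q1+q0) * (1/(1+x)) := mul_nonneg (by linarith) h2.le
    linarith
  have hD2 : 0 < q1 * x + (R*q1+q0+q1) := by
    have : 0 ≤ q1 * x := mul_nonneg hq1.le hx
    linarith
  rw [div_eq_div_iff hD1.ne' hD2.ne']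
  field_simp
  ring

lemma key0 (R p1 p0 q1 q0 x : ℝ) (hx : 0 ≤ x) (hR : 0 ≤ R)
    (hq1 : 0 < q1) (hq0 : 0 ≤ q0) :
    ((R*p1+p0) * (x/(1+x)) + p1) / ((R*q1+q0) * (x/(1+x)) + q1)
      = (((R+1)*p1+p0) * x + p1) / (((R+1)*q1+q0) * x + q1) := by
  have h1 : (0:ℝ) < 1 + x := by linarith
  have h2 : (0:ℝ) ≤ x/(1+x) := by positivity
  have hRq : 0 ≤ R * q1 := mul_nonneg hR hq1.le
  have hD1 : 0 < (R*q1+q0) * (x/(1+x)) + q1 := by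
    have : 0 ≤ (R*q1+q0) * (x/(1+x)) := mul_nonneg (by linarith) h2
    linarith
  have hD2 : 0 < ((R+1)*q1+q0) * x + q1 := by
    have : 0 ≤ ((R+1)*q1+q0) * x := mul_nonneg (by nlinarith) hx
    linarith
  rw [div_eq_div_iff hD1.ne' hD2.ne']
  field_simp
  ring

end Aux4

theorem stmt_7 (β : ℝ) (hβ : β ∈ Set.Ioc (0:ℝ) 1) (a : ℕ → ℕ) (ha : HasCF β a)
    (n : ℕ) (x : ℝ) (hx : x ∈ Set.Icc (0:ℝ) 1) :
    F β n x =
      (((n - kfun β n : ℕ) * P a (mfun β n + 1) + P a (mfun β n) : ℝ) * x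
          + P a (mfun β n + 1)) /
      (((n - kfun β n : ℕ) * Q a (mfun β n + 1) + Q a (mfun β n) : ℝ) * x
          + Q a (mfun β n + 1)) := by
  induction n generalizing x with
  | zero =>
    norm_num [F, mfun_zero, kfun_zero, P, Q]
  | succ n ih =>
    obtain ⟨hx0, hx1⟩ := hx
    have hkn := kfun_le β n
    have h1x : (0:ℝ) < 1 + x := by linarith
    have hq1 : (0:ℝ) < (Q a (mfun β n + 1) : ℝ) := by
      exact_mod_cast Q_pos β a ha (mfun β n)
    by_cases hb : 1/2 < T1^[n] β
    · have hreq : (n - kfun β n) + 1 = a (mfun β n + 1) := (orbit β a ha n).2.2 hb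
      have hstep : F β (n+1) x = F β n (g1 x) := by
        show (F β n ∘ _) x = _
        simp only [Function.comp_apply, if_pos hb]
      have hy0 : (0:ℝ) ≤ g1 x := by rw [g1]; positivity
      have hy1 : g1 x ≤ 1 := by rw [g1, div_le_one h1x]; linarith
      rw [hstep, ih (g1 x) ⟨hy0, hy1⟩, mfun_succ_pos β n hb, kfun_succ_pos β n hb, Nat.sub_self]
      have hP : (P a (mfun β n + 1 + 1) : ℝ)
          = ((n - kfun β n : ℕ) : ℝ) * P a (mfun β n + 1) + P a (mfun β n) + P a (mfun β n + 1) := by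
        have h : P a (mfun β n + 1 + 1) = a (mfun β n + 1) * P a (mfun β n + 1) + P a (mfun β n) := by
          simp [P]
        rw [h, ← hreq]; push_cast; ring
      have hQ : (Q a (mfun β n + 1 + 1) : ℝ)
          = ((n - kfun β n : ℕ) : ℝ) * Q a (mfun β n + 1) + Q a (mfun β n) + Q a (mfun β n + 1) := by
        have h : Q a (mfun β n + 1 + 1) = a (mfun β n + 1) * Q a (mfun β n + 1) + Q a (mfun β n) := by
          simp [Q]
        rw [h, ← hreq]; push_cast; ring
      rw [hP, hQ, g1]
      simp only [Nat.cast_zero, zero_mul, zero_add]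
      exact key1 _ _ _ _ _ x hx0 (Nat.cast_nonneg _) hq1 (Nat.cast_nonneg _) (by
        have h2 : (0:ℝ) < 1/(1+x) := by positivity
        have hRq : (0:ℝ) ≤ ((n - kfun β n : ℕ):ℝ) * (Q a (mfun β n + 1):ℝ) :=
          mul_nonneg (Nat.cast_nonneg _) hq1.le
        have : (0:ℝ) ≤ (((n - kfun β n : ℕ):ℝ) * (Q a (mfun β n + 1):ℝ) + (Q a (mfun β n):ℝ)) * (1/(1+x)) :=
          mul_nonneg (by positivity) h2.le
        positivity)
    · have hstep : F β (n+1) x = F β n (g0 x) := by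
        show (F β n ∘ _) x = _
        simp only [Function.comp_apply, if_neg hb]
      have hy0 : (0:ℝ) ≤ g0 x := by rw [g0]; positivity
      have hy1 : g0 x ≤ 1 := by rw [g0, div_le_one h1x]; linarith
      have hsub : n + 1 - kfun β (n+1) = (n - kfun β n) + 1 := by
        rw [kfun_succ_neg β n hb]; omega
      rw [hstep, ih (g0 x) ⟨hy0, hy1⟩, mfun_succ_neg β n hb, hsub, g0]
      push_cast
      exact key0 _ _ _ _ _ x hx0 (Nat.cast_nonneg _) hq1 (Nat.cast_nonneg _)
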